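/- Let A be an m×n complex matrix with M (m×m) and N (n×n) Hermitian positive definite. Define the weighted conjugate transpose A^# = N^{-1} A* M. Then A†_{M,N} = lim_{λ → 0+} (λI + A^# A)^{-1} A^#. -/

import Mathlib

open Matrix Filter Topology
open scoped ComplexOrder

/-- The four equations characterizing the weighted Moore-Penrose inverse of `A`
with respect to the weights `(M, N)`. -/
def IsWMP {m n : ℕ} (M : Matrix (Fin m) (Fin m) ℂ) (N : Matrix (Fin n) (Fin n) ℂ)
    (A : Matrix (Fin m) (Fin n) ℂ) (X : Matrix (Fin n) (Fin m) ℂ) : Prop :=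
  A * X * A = A ∧ X * A * X = X ∧ (M * A * X)ᴴ = M * A * X ∧ (N * X * A)ᴴ = N * X * A

private lemma conj_mul_conj {n : ℕ} (S P Q : Matrix (Fin n) (Fin n) ℂ)
    (hS1 : S * S⁻¹ = 1) :
    (S⁻¹ * P * S) * (S⁻¹ * Q * S) = S⁻¹ * (P * Q) * S := by
  calc (S⁻¹ * P * S) * (S⁻¹ * Q * S)
      = S⁻¹ * (P * ((S * S⁻¹) * (Q * S))) := by simp only [Matrix.mul_assoc]
    _ = S⁻¹ * (P * Q) * S := by
        rw [hS1, Matrix.one_mul]; simp only [Matrix.mul_assoc]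

private lemma key_tendsto {n : ℕ} {C : Matrix (Fin n) (Fin n) ℂ} (hC : C.PosSemidef) :
    Tendsto (fun lam : ℝ =>
      (lam : ℂ) • ((((lam : ℂ) • (1 : Matrix (Fin n) (Fin n) ℂ) + C)⁻¹) * C))
      (𝓝[>] (0 : ℝ)) (𝓝 0) := by
  have hCh : C.IsHermitian := hC.isHermitian
  set U : Matrix (Fin n) (Fin n) ℂ := (hCh.eigenvectorUnitary : Matrix (Fin n) (Fin n) ℂ) with hU
  set d : Fin n → ℝ := hCh.eigenvalues with hd
  have hUU : U * star U = 1 := (Matrix.mem_unitaryGroup_iff).mp hCh.eigenvectorUnitary.2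
  have hUU' : star U * U = 1 := (Matrix.mem_unitaryGroup_iff').mp hCh.eigenvectorUnitary.2
  have hspec : C = U * diagonal (fun i => (d i : ℂ)) * star U := hCh.spectral_theorem
  have hdnn : ∀ i, 0 ≤ d i := hC.eigenvalues_nonneg
  have hne : ∀ lam : ℝ, lam ∈ Set.Ioi (0:ℝ) → ∀ i, ((lam : ℂ) + (d i : ℂ)) ≠ 0 := by
    intro lam hlam i
    have h1 : (0:ℝ) < lam + d i := by
      have := hdnn i; simp only [Set.mem_Ioi] at hlam; linarith
    rw [show ((lam:ℂ) + (d i : ℂ)) = ((lam + d i : ℝ) : ℂ) by push_cast; ring]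
    exact_mod_cast h1.ne'
  have heq : ∀ lam ∈ Set.Ioi (0:ℝ),
      ((lam : ℂ) • ((((lam : ℂ) • (1 : Matrix (Fin n) (Fin n) ℂ) + C)⁻¹) * C))
        = U * diagonal (fun i => (lam : ℂ) * (((lam : ℂ) + (d i : ℂ))⁻¹ * (d i : ℂ))) * star U := by
    intro lam hlam
    have hsum : (lam : ℂ) • (1 : Matrix (Fin n) (Fin n) ℂ) + C
        = U * diagonal (fun i => (lam : ℂ) + (d i : ℂ)) * star U := by
      have hdl : diagonal (fun i => (lam:ℂ) + (d i:ℂ))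
          = diagonal (fun _ : Fin n => (lam:ℂ)) + diagonal (fun i => (d i : ℂ)) :=
        (diagonal_add _ _).symm
      rw [hdl, Matrix.mul_add, Matrix.add_mul, ← hspec, ← smul_one_eq_diagonal,
        mul_smul_comm, Matrix.mul_one, smul_mul_assoc, hUU]
    have hinv : ((lam : ℂ) • (1 : Matrix (Fin n) (Fin n) ℂ) + C)⁻¹
        = U * diagonal (fun i => ((lam : ℂ) + (d i : ℂ))⁻¹) * star U := by
      apply inv_eq_right_inv
      rw [hsum]
      calc (U * diagonal (fun i => (lam : ℂ) + (d i : ℂ)) * star U)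
            * (U * diagonal (fun i => ((lam : ℂ) + (d i : ℂ))⁻¹) * star U)
          = U * (diagonal (fun i => (lam : ℂ) + (d i : ℂ)) * ((star U * U) *
              (diagonal (fun i => ((lam : ℂ) + (d i : ℂ))⁻¹) * star U))) := by
            simp only [Matrix.mul_assoc]
        _ = U * ((diagonal (fun i => (lam : ℂ) + (d i : ℂ)) *
              diagonal (fun i => ((lam : ℂ) + (d i : ℂ))⁻¹)) * star U) := by
            rw [hUU', Matrix.one_mul, Matrix.mul_assoc]
        _ = 1 := by
            rw [diagonal_mul_diagonal]
            have : (fun i => ((lam : ℂ) + (d i : ℂ)) * ((lam : ℂ) + (d i : ℂ))⁻¹)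
                = fun _ : Fin n => (1:ℂ) := by
              funext i; exact mul_inv_cancel₀ (hne lam hlam i)
            rw [this, diagonal_one, Matrix.one_mul, hUU]
    rw [hinv]
    conv_lhs => rw [hspec]
    calc (lam : ℂ) • ((U * diagonal (fun i => ((lam : ℂ) + (d i : ℂ))⁻¹) * star U)
            * (U * diagonal (fun i => (d i : ℂ)) * star U))
        = (lam : ℂ) • (U * (diagonal (fun i => ((lam : ℂ) + (d i : ℂ))⁻¹) * ((star U * U) *
            (diagonal (fun i => (d i : ℂ)) * star U)))) := by simp only [Matrix.mul_assoc]
      _ = U * diagonal (fun i => (lam : ℂ) * (((lam : ℂ) + (d i : ℂ))⁻¹ * (d i : ℂ))) * star U := by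
          rw [hUU', Matrix.one_mul]
          rw [show (fun i => (lam : ℂ) * (((lam : ℂ) + (d i : ℂ))⁻¹ * (d i : ℂ)))
              = (lam : ℂ) • fun i => ((lam : ℂ) + (d i : ℂ))⁻¹ * (d i : ℂ) from rfl,
            diagonal_smul, ← diagonal_mul_diagonal, mul_smul_comm, smul_mul_assoc]
          simp only [Matrix.mul_assoc]
  have hdiag : Tendsto (fun lam : ℝ =>
      diagonal (fun i => (lam : ℂ) * (((lam : ℂ) + (d i : ℂ))⁻¹ * (d i : ℂ))))
      (𝓝[>] (0 : ℝ)) (𝓝 (0 : Matrix (Fin n) (Fin n) ℂ)) := by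
    rw [show (0 : Matrix (Fin n) (Fin n) ℂ) = diagonal (fun _ : Fin n => (0:ℂ)) by
      simp]
    refine tendsto_pi_nhds.mpr ?_
    intro i
    rw [tendsto_pi_nhds]
    intro j
    rcases eq_or_ne i j with rfl | hij
    · simp only [diagonal_apply_eq]
      rcases eq_or_lt_of_le (hdnn i) with h | h
      · have : (fun lam : ℝ => (lam : ℂ) * (((lam : ℂ) + (d i : ℂ))⁻¹ * (d i : ℂ)))
            = fun _ : ℝ => (0:ℂ) := by
          funext lam; rw [← h]; simp
        rw [this]; exact tendsto_const_nhds
      · have h1 : Tendsto (fun lam : ℝ => (lam : ℂ)) (𝓝[>] (0:ℝ)) (𝓝 0) := by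
          simpa using (Complex.continuous_ofReal.tendsto 0).mono_left nhdsWithin_le_nhds
        have h2 : Tendsto (fun lam : ℝ => ((lam : ℂ) + (d i : ℂ))⁻¹ * (d i : ℂ))
            (𝓝[>] (0:ℝ)) (𝓝 (((0:ℂ) + (d i : ℂ))⁻¹ * (d i : ℂ))) := by
          refine Tendsto.mul_const _ (Tendsto.inv₀ (by simpa using h1.add_const ((d i : ℂ))) ?_)
          simp only [zero_add]
          exact_mod_cast h.ne'
        simpa using h1.mul h2
    · simp only [diagonal_apply_ne _ hij]
      exact tendsto_const_nhds
  have hfinal : Tendsto (fun lam : ℝ =>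
      U * diagonal (fun i => (lam : ℂ) * (((lam : ℂ) + (d i : ℂ))⁻¹ * (d i : ℂ))) * star U)
      (𝓝[>] (0 : ℝ)) (𝓝 0) := by
    simpa using (hdiag.const_mul U).mul_const (star U)
  exact Tendsto.congr' (eventuallyEq_of_mem self_mem_nhdsWithin
    fun lam hlam => (heq lam hlam).symm) hfinal
  
/-- A†_{M,N} = lim_{λ→0+} (λI + A^# A)⁻¹ A^#, with A^# = N⁻¹ A* M. -/
theorem stmt_2 {m n : ℕ} (A : Matrix (Fin m) (Fin n) ℂ)
    (M : Matrix (Fin m) (Fin m) ℂ) (N : Matrix (Fin n) (Fin n) ℂ)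
    (hM : M.PosDef) (hN : N.PosDef)
    (X : Matrix (Fin n) (Fin m) ℂ) (hX : IsWMP M N A X) :
    Tendsto
      (fun lam : ℝ =>
        ((lam : ℂ) • (1 : Matrix (Fin n) (Fin n) ℂ) + N⁻¹ * Aᴴ * M * A)⁻¹ * (N⁻¹ * Aᴴ * M))
      (𝓝[>] (0 : ℝ)) (𝓝 X) := by
  classical
  obtain ⟨h1, h2, h3, h4⟩ := hX
  have hMh : Mᴴ = M := hM.isHermitian
  have hNh : Nᴴ = N := hN.isHermitian
  have hMdet : IsUnit M.det := (Matrix.isUnit_iff_isUnit_det M).mp hM.isUnit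
  have hNdet : IsUnit N.det := (Matrix.isUnit_iff_isUnit_det N).mp hN.isUnit
  obtain ⟨S, hSsa, -, hSS⟩ : ∃ S : Matrix (Fin n) (Fin n) ℂ, IsSelfAdjoint S ∧
      QuasispectrumRestricts S ContinuousMap.realToNNReal ∧ S * S = N := by
    open scoped MatrixOrder in
    exact CFC.exists_sqrt_of_isSelfAdjoint_of_quasispectrumRestricts hN.isHermitian
      (QuasispectrumRestricts.nnreal_of_nonneg hN.posSemidef.nonneg)
  have hSh : S.IsHermitian := hSsa
  have hSdet : IsUnit S.det := by
    have : S.det * S.det = N.det := by rw [← Matrix.det_mul, hSS]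
    exact isUnit_of_mul_isUnit_left (this ▸ hNdet)
  have hS1 : S * S⁻¹ = 1 := Matrix.mul_nonsing_inv S hSdet
  have hS2 : S⁻¹ * S = 1 := Matrix.nonsing_inv_mul S hSdet
  have hSih : (S⁻¹)ᴴ = S⁻¹ := by
    rw [Matrix.conjTranspose_nonsing_inv, hSh.eq]
  have hNinv : N⁻¹ = S⁻¹ * S⁻¹ := by rw [← hSS, Matrix.mul_inv_rev]
  set As : Matrix (Fin n) (Fin m) ℂ := N⁻¹ * Aᴴ * M with hAsdef
  set B : Matrix (Fin n) (Fin n) ℂ := As * A with hBdef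
  set C : Matrix (Fin n) (Fin n) ℂ := (A * S⁻¹)ᴴ * M * (A * S⁻¹) with hCdef
  have hC : C.PosSemidef := hM.posSemidef.conjTranspose_mul_mul_same (A * S⁻¹)
  have hCe : C = S⁻¹ * (Aᴴ * (M * (A * S⁻¹))) := by
    rw [hCdef, Matrix.conjTranspose_mul, hSih]
    simp only [Matrix.mul_assoc]
  have hBC : B = S⁻¹ * C * S := by
    rw [hBdef, hAsdef, hNinv, hCe]
    simp only [Matrix.mul_assoc, hS2, Matrix.mul_one]
  -- e1 : B * X = As
  have h3' : Xᴴ * (Aᴴ * M) = M * (A * X) := by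
    calc Xᴴ * (Aᴴ * M) = (M * A * X)ᴴ := by
          rw [Matrix.conjTranspose_mul, Matrix.conjTranspose_mul, hMh]
      _ = M * (A * X) := by rw [h3, Matrix.mul_assoc]
  have e1 : B * X = As := by
    calc B * X = N⁻¹ * (Aᴴ * (M * (A * X))) := by
          rw [hBdef, hAsdef]; simp only [Matrix.mul_assoc]
      _ = N⁻¹ * (Aᴴ * (Xᴴ * (Aᴴ * M))) := by rw [← h3']
      _ = N⁻¹ * ((A * X * A)ᴴ * M) := by
          rw [Matrix.conjTranspose_mul, Matrix.conjTranspose_mul]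
          simp only [Matrix.mul_assoc]
      _ = As := by rw [h1, hAsdef, Matrix.mul_assoc]
  set W : Matrix (Fin m) (Fin m) ℂ := M⁻¹ * (Xᴴ * (N * X)) with hWdef
  have h4' : Aᴴ * (Xᴴ * N) = N * (X * A) := by
    calc Aᴴ * (Xᴴ * N) = (N * X * A)ᴴ := by
          rw [Matrix.conjTranspose_mul, Matrix.conjTranspose_mul, hNh]
      _ = N * (X * A) := by rw [h4, Matrix.mul_assoc]
  have e2 : B * (X * W) = X := by
    calc B * (X * W) = As * W := by rw [← Matrix.mul_assoc, e1]
      _ = N⁻¹ * (Aᴴ * (M * (M⁻¹ * (Xᴴ * (N * X))))) := by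
          rw [hAsdef, hWdef]; simp only [Matrix.mul_assoc]
      _ = N⁻¹ * (Aᴴ * (Xᴴ * (N * X))) := by
          rw [Matrix.mul_nonsing_inv_cancel_left M _ hMdet]
      _ = N⁻¹ * (Aᴴ * (Xᴴ * N) * X) := by simp only [Matrix.mul_assoc]
      _ = N⁻¹ * (N * (X * A) * X) := by rw [h4']
      _ = N⁻¹ * (N * (X * (A * X))) := by simp only [Matrix.mul_assoc]
      _ = X * (A * X) := by rw [Matrix.nonsing_inv_mul_cancel_left N _ hNdet]
      _ = X := by rw [← Matrix.mul_assoc, h2]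
  set K : Matrix (Fin n) (Fin m) ℂ := S * (X * W) with hKdef
  -- per-lambda identity
  have key : ∀ lam : ℝ, lam ∈ Set.Ioi (0:ℝ) →
      ((lam : ℂ) • (1 : Matrix (Fin n) (Fin n) ℂ) + B)⁻¹ * As
        = X - S⁻¹ * ((lam : ℂ) • (((lam : ℂ) • (1 : Matrix (Fin n) (Fin n) ℂ) + C)⁻¹ * C)) * K := by
    intro lam hlam
    have hlam' : (0:ℝ) < lam := hlam
    set T : Matrix (Fin n) (Fin n) ℂ := (lam : ℂ) • (1 : Matrix (Fin n) (Fin n) ℂ) + C with hTdef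
    have hTpd : T.PosDef := by
      refine Matrix.PosDef.add_posSemidef ?_ hC
      rw [smul_one_eq_diagonal]
      exact Matrix.posDef_diagonal_iff.mpr fun i => Complex.zero_lt_real.mpr hlam'
    have hTdet : IsUnit T.det := (Matrix.isUnit_iff_isUnit_det T).mp hTpd.isUnit
    have hT1 : T * T⁻¹ = 1 := Matrix.mul_nonsing_inv T hTdet
    have hT2 : T⁻¹ * T = 1 := Matrix.nonsing_inv_mul T hTdet
    have hTB : (lam : ℂ) • (1 : Matrix (Fin n) (Fin n) ℂ) + B = S⁻¹ * T * S := by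
      rw [hTdef, Matrix.mul_add, Matrix.add_mul, hBC]
      congr 1
      rw [mul_smul_comm, Matrix.mul_one, smul_mul_assoc, hS2]
    have hTinv : ((lam : ℂ) • (1 : Matrix (Fin n) (Fin n) ℂ) + B)⁻¹ = S⁻¹ * T⁻¹ * S := by
      apply inv_eq_right_inv
      rw [hTB, conj_mul_conj S T T⁻¹ hS1, hT1, Matrix.mul_one, hS2]
    have hTl : ((lam : ℂ) • (1 : Matrix (Fin n) (Fin n) ℂ) + B)⁻¹
        * ((lam : ℂ) • (1 : Matrix (Fin n) (Fin n) ℂ) + B) = 1 := by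
      rw [hTinv, hTB, conj_mul_conj S T⁻¹ T hS1, hT2, Matrix.mul_one, hS2]
    have hXeq : X = (lam : ℂ) • (((lam : ℂ) • (1 : Matrix (Fin n) (Fin n) ℂ) + B)⁻¹ * X)
        + ((lam : ℂ) • (1 : Matrix (Fin n) (Fin n) ℂ) + B)⁻¹ * As := by
      have hmulX : ((lam : ℂ) • (1 : Matrix (Fin n) (Fin n) ℂ) + B) * X
          = (lam : ℂ) • X + As := by
        rw [Matrix.add_mul, Matrix.smul_mul, Matrix.one_mul, e1]
      calc X = (((lam : ℂ) • (1 : Matrix (Fin n) (Fin n) ℂ) + B)⁻¹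
              * ((lam : ℂ) • (1 : Matrix (Fin n) (Fin n) ℂ) + B)) * X := by
            rw [hTl, Matrix.one_mul]
        _ = ((lam : ℂ) • (1 : Matrix (Fin n) (Fin n) ℂ) + B)⁻¹ * ((lam : ℂ) • X + As) := by
            rw [Matrix.mul_assoc, hmulX]
        _ = (lam : ℂ) • (((lam : ℂ) • (1 : Matrix (Fin n) (Fin n) ℂ) + B)⁻¹ * X)
              + ((lam : ℂ) • (1 : Matrix (Fin n) (Fin n) ℂ) + B)⁻¹ * As := by
            rw [Matrix.mul_add, Matrix.mul_smul]
    have hTX : ((lam : ℂ) • (1 : Matrix (Fin n) (Fin n) ℂ) + B)⁻¹ * X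
        = S⁻¹ * (T⁻¹ * C) * K := by
      conv_lhs => rw [← e2]
      rw [← Matrix.mul_assoc, hTinv, hBC, conj_mul_conj S T⁻¹ C hS1, hKdef, Matrix.mul_assoc]
    rw [eq_sub_iff_add_eq, add_comm]
    conv_rhs => rw [hXeq]
    congr 1
    rw [hTX, Matrix.mul_smul, Matrix.smul_mul]
  -- conclusion
  have h0 := key_tendsto hC
  have hlim : Tendsto (fun lam : ℝ =>
      X - S⁻¹ * ((lam : ℂ) • (((lam : ℂ) • (1 : Matrix (Fin n) (Fin n) ℂ) + C)⁻¹ * C)) * K)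
      (𝓝[>] (0 : ℝ)) (𝓝 X) := by
    have hm : Tendsto (fun lam : ℝ =>
        S⁻¹ * ((lam : ℂ) • (((lam : ℂ) • (1 : Matrix (Fin n) (Fin n) ℂ) + C)⁻¹ * C)) * K)
        (𝓝[>] (0 : ℝ)) (𝓝 (S⁻¹ * 0 * K)) := by
      have hcont : Continuous (fun Y : Matrix (Fin n) (Fin n) ℂ => Y * K) :=
        continuous_id.matrix_mul continuous_const
      exact (hcont.tendsto _).comp (h0.const_mul S⁻¹)
    simpa using tendsto_const_nhds.sub hm
  exact Tendsto.congr' (eventuallyEq_of_mem self_mem_nhdsWithin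
    fun lam hlam => (key lam hlam).symm) hlim
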